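/- Let G be a controllable graph on n vertices with adjacency matrix A and walk matrix W. Let Q be a rational orthogonal matrix with Qe = e such that QᵀAQ is a symmetric (0,1)-matrix with zero diagonal, and suppose the level of Q equals 2. Then there exists a (0,1)-vector u with exactly four entries equal to 1 such that uᵀAᵏu ≡ 0 (mod 4) for all k = 1, 2, …, n−1; moreover this u satisfies Wᵀu ≡ 0 (mod 2) and u ≢ 0 (mod 2). -/

import Mathlib

open Matrix

open scoped Classical in
/-- The (0,1)-adjacency matrix of a simple graph on `Fin n`, with entries in `R`. -/
noncomputable def adjMat {n : ℕ} (R : Type*) [Zero R] [One R] (G : SimpleGraph (Fin n)) :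
    Matrix (Fin n) (Fin n) R :=
  Matrix.of fun i j => if G.Adj i j then 1 else 0

/-- The walk matrix `W = [e, Ae, A²e, …, A^{n−1}e]` of a square matrix `A`,
where `e` is the all-ones vector: the `j`-th column is `A^j e`. -/
noncomputable def walkMatrix {R : Type*} [CommRing R] {n : ℕ} (A : Matrix (Fin n) (Fin n) R) :
    Matrix (Fin n) (Fin n) R :=
  Matrix.of fun i j => (A ^ (j : ℕ) *ᵥ fun _ => 1) i

lemma aux_sq_entries {n : ℕ} (v : Fin n → ℤ) (hs : ∑ i, v i ^ 2 = 4)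
    {i₀ : Fin n} (hodd : ¬ (2:ℤ) ∣ v i₀) : ∀ i, v i = 0 ∨ v i = 1 ∨ v i = -1 := by
  have hle : ∀ i, v i ^ 2 ≤ 4 := by
    intro i
    calc v i ^ 2 ≤ ∑ j, v j ^ 2 :=
        Finset.single_le_sum (f := fun j => v j ^ 2) (fun j _ => sq_nonneg _)
          (Finset.mem_univ i)
      _ = 4 := hs
  intro i
  rcases em ((2:ℤ) ∣ v i) with he | ho
  · left
    by_contra h0
    obtain ⟨c, hc⟩ := he
    have hc0 : c ≠ 0 := by rintro rfl; simp at hc; exact h0 hc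
    have hc1 : 1 ≤ c * c := by rcases lt_or_gt_of_ne hc0 with h | h <;> nlinarith
    have hsq : v i ^ 2 = 4 * (c * c) := by rw [hc]; ring
    have h4 : v i ^ 2 = 4 := by have := hle i; omega
    have hrest : ∑ j ∈ Finset.univ.erase i, v j ^ 2 = 0 := by
      have h := Finset.add_sum_erase Finset.univ (fun j => v j ^ 2) (Finset.mem_univ i)
      simp only [hs] at h
      omega
    have hi0 : i₀ ≠ i := by rintro rfl; exact hodd ⟨c, hc⟩
    have h00 : v i₀ ^ 2 = 0 :=
      (Finset.sum_eq_zero_iff_of_nonneg (fun j _ => sq_nonneg (v j))).mp hrest i₀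
        (Finset.mem_erase.mpr ⟨hi0, Finset.mem_univ _⟩)
    have : v i₀ = 0 := by nlinarith
    exact hodd (by rw [this]; exact dvd_zero 2)
  · have h1 : -2 ≤ v i := by nlinarith [hle i]
    have h2 : v i ≤ 2 := by nlinarith [hle i]
    omega

lemma aux_four_dvd_shift {n : ℕ} (M : Matrix (Fin n) (Fin n) ℤ) (hM : M.IsSymm)
    (v w : Fin n → ℤ) (h4 : (4:ℤ) ∣ v ⬝ᵥ M *ᵥ v) :
    (4:ℤ) ∣ (fun i => v i + 2 * w i) ⬝ᵥ (M *ᵥ fun i => v i + 2 * w i) := by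
  have hsw : v ⬝ᵥ M *ᵥ w = w ⬝ᵥ M *ᵥ v := by
    rw [Matrix.dotProduct_mulVec, ← Matrix.mulVec_transpose, hM.eq, dotProduct_comm]
  have hd : ∀ (a b : Fin n → ℤ), a ⬝ᵥ M *ᵥ b = ∑ i, ∑ j, a i * (M i j * b j) := by
    intro a b; simp [dotProduct, mulVec, Finset.mul_sum]
  have expand : (fun i => v i + 2 * w i) ⬝ᵥ (M *ᵥ fun i => v i + 2 * w i)
      = v ⬝ᵥ M *ᵥ v + 2 * (v ⬝ᵥ M *ᵥ w) + 2 * (w ⬝ᵥ M *ᵥ v) + 4 * (w ⬝ᵥ M *ᵥ w) := by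
    rw [hd, hd, hd, hd, hd]
    simp only [Finset.mul_sum, ← Finset.sum_add_distrib]
    exact Finset.sum_congr rfl fun i _ => Finset.sum_congr rfl fun j _ => by ring
  obtain ⟨c, hc⟩ := h4
  rw [expand, hsw, hc]
  exact ⟨c + (w ⬝ᵥ M *ᵥ v) + (w ⬝ᵥ M *ᵥ w), by ring⟩

lemma aux_pow_conj {n : ℕ} (Q A : Matrix (Fin n) (Fin n) ℚ) (hQorth : Qᵀ * Q = 1) :
    ∀ k : ℕ, Qᵀ * A ^ k * Q = (Qᵀ * A * Q) ^ k := by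
  have hQQt : Q * Qᵀ = 1 := mul_eq_one_comm.mp hQorth
  intro k
  induction k with
  | zero => simp [hQorth]
  | succ k ih =>
    rw [pow_succ, pow_succ, ← ih]
    calc Qᵀ * (A ^ k * A) * Q = (Qᵀ * A ^ k) * (Q * Qᵀ) * (A * Q) := by
          rw [hQQt]; simp [mul_assoc]
      _ = Qᵀ * A ^ k * Q * (Qᵀ * A * Q) := by simp [mul_assoc]

lemma aux_key_scalar {n : ℕ} (Q M : Matrix (Fin n) (Fin n) ℚ) (j₀ : Fin n) :
    ∑ i, 2 * Q i j₀ * (∑ j, M i j * (2 * Q j j₀)) = 4 * (Qᵀ * M * Q) j₀ j₀ := by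
  simp only [Matrix.mul_apply, Matrix.transpose_apply]
  calc ∑ i, 2 * Q i j₀ * (∑ j, M i j * (2 * Q j j₀))
      = ∑ i, ∑ j, 4 * (Q i j₀ * M i j * Q j j₀) := by
        refine Finset.sum_congr rfl fun i _ => ?_
        rw [Finset.mul_sum]
        exact Finset.sum_congr rfl fun j _ => by ring
    _ = ∑ j, ∑ i, 4 * (Q i j₀ * M i j * Q j j₀) := Finset.sum_comm
    _ = 4 * ∑ j, (∑ i, Q i j₀ * M i j) * Q j j₀ := by
        rw [Finset.mul_sum]
        refine Finset.sum_congr rfl fun j _ => ?_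
        rw [Finset.sum_mul, Finset.mul_sum]

lemma aux_walk_scalar {n : ℕ} (Q M : Matrix (Fin n) (Fin n) ℚ) (j₀ : Fin n)
    (hrow : ∀ a, ∑ j, Q a j = 1) (hMs : ∀ a b, M a b = M b a) :
    ∑ i, (∑ b, M i b) * (2 * Q i j₀) = 2 * ∑ i, (Qᵀ * M * Q) i j₀ := by
  simp only [Matrix.mul_apply, Matrix.transpose_apply]
  have hR : ∑ i, ∑ b, (∑ a, Q a i * M a b) * Q b j₀
      = ∑ b, (∑ a, M a b) * Q b j₀ := by
    calc ∑ i, ∑ b, (∑ a, Q a i * M a b) * Q b j₀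
        = ∑ i, ∑ b, ∑ a, Q a i * (M a b * Q b j₀) := by
          refine Finset.sum_congr rfl fun i _ => Finset.sum_congr rfl fun b _ => ?_
          rw [Finset.sum_mul]
          exact Finset.sum_congr rfl fun a _ => by ring
      _ = ∑ b, ∑ a, ∑ i, Q a i * (M a b * Q b j₀) := by
          rw [Finset.sum_comm]
          exact Finset.sum_congr rfl fun b _ => Finset.sum_comm
      _ = ∑ b, ∑ a, M a b * Q b j₀ := by
          refine Finset.sum_congr rfl fun b _ => Finset.sum_congr rfl fun a _ => ?_
          rw [← Finset.sum_mul, hrow a, one_mul]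
      _ = ∑ b, (∑ a, M a b) * Q b j₀ := by
          refine Finset.sum_congr rfl fun b _ => ?_
          rw [Finset.sum_mul]
  rw [hR, Finset.mul_sum]
  refine Finset.sum_congr rfl fun i _ => ?_
  have h : (∑ b, M i b) = ∑ a, M a i := Finset.sum_congr rfl fun b _ => hMs i b
  rw [h]; ring

/-- **Lemma 4.4.** If `Q ∈ 𝒬_G` has level `ℓ = 2`, then there is a
(0,1)-vector `u` with exactly four entries equal to `1` such that
`uᵀAᵏu ≡ 0 (mod 4)` for `k = 1, …, n − 1`; moreover `Wᵀu ≡ 0` and `u ≢ 0 (mod 2)`. -/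
theorem stmt_16 {n : ℕ} (G : SimpleGraph (Fin n))
    (A : Matrix (Fin n) (Fin n) ℚ) (hA : A = adjMat ℚ G)
    (AZ : Matrix (Fin n) (Fin n) ℤ) (hAZ : AZ = adjMat ℤ G)
    (W : Matrix (Fin n) (Fin n) ℤ) (hW : W = walkMatrix AZ)
    (hctrl : W.det ≠ 0)
    (Q : Matrix (Fin n) (Fin n) ℚ)
    (hQorth : Qᵀ * Q = 1) (hQe : Q *ᵥ (fun _ => 1) = fun _ => 1)
    (hsymm : (Qᵀ * A * Q).IsSymm)
    (h01 : ∀ i j, (Qᵀ * A * Q) i j = 0 ∨ (Qᵀ * A * Q) i j = 1)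
    (hdiag : ∀ i, (Qᵀ * A * Q) i i = 0)
    (hlevel : IsLeast {m : ℕ | 0 < m ∧ ∀ i j, ∃ z : ℤ, (m : ℚ) * Q i j = (z : ℚ)} 2) :
    ∃ u : Fin n → ℤ,
      (∀ i, u i = 0 ∨ u i = 1) ∧
      (Finset.univ.filter fun i => u i = 1).card = 4 ∧
      (∀ k : ℕ, 1 ≤ k → k ≤ n - 1 → (4 : ℤ) ∣ u ⬝ᵥ ((AZ ^ k) *ᵥ u)) ∧
      (∀ i, (2 : ℤ) ∣ (Wᵀ *ᵥ u) i) ∧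
      ¬(∀ i, (2 : ℤ) ∣ u i) := by
  classical
  obtain ⟨⟨-, h2⟩, hlb⟩ := hlevel
  choose N hN using h2
  have hN' : ∀ i j, (N i j : ℚ) = 2 * Q i j := by
    intro i j; rw [← hN i j]; push_cast; ring
  -- Q is not an integer matrix
  have h1 : ¬ ∀ i j, ∃ z : ℤ, Q i j = (z : ℚ) := by
    intro h
    have hmem : 1 ∈ {m : ℕ | 0 < m ∧ ∀ i j, ∃ z : ℤ, (m : ℚ) * Q i j = (z : ℚ)} := by
      refine ⟨one_pos, fun i j => ?_⟩
      obtain ⟨z, hz⟩ := h i j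
      exact ⟨z, by rw [hz]; push_cast; ring⟩
    have := hlb hmem
    omega
  -- there is an odd entry of N
  have hoddN : ∃ i j, ¬ (2:ℤ) ∣ N i j := by
    by_contra h
    push_neg at h
    apply h1
    intro i j
    obtain ⟨c, hc⟩ := h i j
    refine ⟨c, ?_⟩
    have := hN' i j
    rw [hc] at this
    push_cast at this
    linarith
  obtain ⟨i₀, j₀, hodd⟩ := hoddN
  -- the column j₀ of N: column sum of squares equals 4
  set v : Fin n → ℤ := fun i => N i j₀ with hvdef
  have h1q : ∑ i, Q i j₀ * Q i j₀ = 1 := by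
    have := congrFun (congrFun hQorth j₀) j₀
    simpa [Matrix.mul_apply, Matrix.transpose_apply, Matrix.one_apply] using this
  have hcol : ∑ i, v i ^ 2 = 4 := by
    have hq : ((∑ i, v i ^ 2 : ℤ) : ℚ) = 4 := by
      push_cast
      calc ∑ i, ((v i : ℚ)) ^ 2 = ∑ i, (2 * Q i j₀) ^ 2 := by
            refine Finset.sum_congr rfl fun i _ => ?_
            rw [hN' i j₀]
        _ = 4 * ∑ i, Q i j₀ * Q i j₀ := by
            rw [Finset.mul_sum]
            exact Finset.sum_congr rfl fun i _ => by ring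
        _ = 4 := by rw [h1q]; ring
    exact_mod_cast hq
  have hvals : ∀ i, v i = 0 ∨ v i = 1 ∨ v i = -1 := aux_sq_entries v hcol hodd
  -- define u
  set u : Fin n → ℤ := fun i => v i * v i with hudef
  have hu01 : ∀ i, u i = 0 ∨ u i = 1 := by
    intro i; rcases hvals i with h | h | h <;> simp [hudef, h]
  -- u ≡ v (mod 2): u i = v i + 2 * w i
  have hwex : ∀ i, ∃ c : ℤ, u i = v i + 2 * c := by
    intro i
    rcases hvals i with h | h | h
    · exact ⟨0, by simp [hudef, h]⟩
    · exact ⟨0, by simp [hudef, h]⟩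
    · exact ⟨1, by simp [hudef, h]⟩
  choose w hw using hwex
  have hufn : u = fun i => v i + 2 * w i := funext hw
  -- cardinality
  have hcard : (Finset.univ.filter fun i => u i = 1).card = 4 := by
    have hZ : ((Finset.univ.filter fun i => u i = 1).card : ℤ) = 4 := by
      calc ((Finset.univ.filter fun i => u i = 1).card : ℤ)
          = ∑ i ∈ Finset.univ.filter fun i => u i = 1, (1 : ℤ) := by simp
        _ = ∑ i ∈ Finset.univ.filter fun i => u i = 1, u i :=
            Finset.sum_congr rfl fun i hi => ((Finset.mem_filter.mp hi).2).symm
        _ = ∑ i, u i := by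
            refine Finset.sum_subset (Finset.filter_subset _ _) fun i _ hi => ?_
            rcases hu01 i with h | h
            · exact h
            · exact absurd (Finset.mem_filter.mpr ⟨Finset.mem_univ i, h⟩) hi
        _ = ∑ i, v i ^ 2 := Finset.sum_congr rfl fun i _ => by rw [hudef]; ring
        _ = 4 := hcol
    exact_mod_cast hZ
  -- integer model BZ of B = Qᵀ A Q
  set B : Matrix (Fin n) (Fin n) ℚ := Qᵀ * A * Q with hBdef
  set BZ : Matrix (Fin n) (Fin n) ℤ := Matrix.of fun i j => if B i j = 1 then 1 else 0
    with hBZdef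
  have hmapB : BZ.map (Int.cast : ℤ → ℚ) = B := by
    ext i j
    rcases h01 i j with h | h <;> simp [hBZdef, Matrix.map_apply, h]
  have hmapA : AZ.map (Int.cast : ℤ → ℚ) = A := by
    rw [hA, hAZ]
    ext i j
    simp [adjMat, Matrix.map_apply, apply_ite (Int.cast : ℤ → ℚ)]
  have hmapBpow : ∀ k : ℕ, (BZ ^ k).map (Int.cast : ℤ → ℚ) = B ^ k := by
    intro k
    have := map_pow ((Int.castRingHom ℚ).mapMatrix) BZ k
    simpa [RingHom.mapMatrix_apply, hmapB] using this
  have hmapApow : ∀ k : ℕ, (AZ ^ k).map (Int.cast : ℤ → ℚ) = A ^ k := by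
    intro k
    have := map_pow ((Int.castRingHom ℚ).mapMatrix) AZ k
    simpa [RingHom.mapMatrix_apply, hmapA] using this
  have hAZk : ∀ (k : ℕ) (i j : Fin n), (((AZ ^ k) i j : ℤ) : ℚ) = (A ^ k) i j := by
    intro k i j
    rw [← hmapApow k]; rfl
  have hBZk : ∀ (k : ℕ) (i j : Fin n), (((BZ ^ k) i j : ℤ) : ℚ) = (B ^ k) i j := by
    intro k i j
    rw [← hmapBpow k]; rfl
  have hpow := aux_pow_conj Q A hQorth
  -- AZ symmetric
  have hAZsym : AZ.IsSymm := by
    rw [hAZ]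
    ext i j
    simp [adjMat, Matrix.transpose_apply, G.adj_comm]
  have hAsym : A.IsSymm := by
    rw [hA]
    ext i j
    simp [adjMat, Matrix.transpose_apply, G.adj_comm]
  -- key integer identity
  have hkeyZ : ∀ k : ℕ, v ⬝ᵥ ((AZ ^ k) *ᵥ v) = 4 * (BZ ^ k) j₀ j₀ := by
    intro k
    have hq : ((v ⬝ᵥ ((AZ ^ k) *ᵥ v) : ℤ) : ℚ) = ((4 * (BZ ^ k) j₀ j₀ : ℤ) : ℚ) := by
      have hrhs : ((4 * (BZ ^ k) j₀ j₀ : ℤ) : ℚ) = 4 * (B ^ k) j₀ j₀ := by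
        push_cast [hBZk k]
        ring
      rw [hrhs, ← hpow k]
      simp only [dotProduct, mulVec]
      push_cast
      calc ∑ i, (v i : ℚ) * ∑ j, ((AZ ^ k) i j : ℚ) * (v j : ℚ)
          = ∑ i, 2 * Q i j₀ * (∑ j, (A ^ k) i j * (2 * Q j j₀)) := by
            refine Finset.sum_congr rfl fun i _ => ?_
            rw [hN' i j₀]
            congr 1
            refine Finset.sum_congr rfl fun j _ => ?_
            rw [hAZk k i j, hN' j j₀]
        _ = 4 * (Qᵀ * A ^ k * Q) j₀ j₀ := aux_key_scalar Q (A ^ k) j₀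
    exact_mod_cast hq
  have hdvd4 : ∀ k : ℕ, (4:ℤ) ∣ u ⬝ᵥ ((AZ ^ k) *ᵥ u) := by
    intro k
    rw [hufn]
    exact aux_four_dvd_shift (AZ ^ k) (hAZsym.pow k) v w ⟨(BZ ^ k) j₀ j₀, hkeyZ k⟩
  -- walk matrix part
  have hrow : ∀ a, ∑ j, Q a j = 1 := by
    intro a
    have := congrFun hQe a
    simpa [Matrix.mulVec, dotProduct] using this
  have hWv : ∀ j : Fin n, (2:ℤ) ∣ ∑ i, W i j * v i := by
    intro j
    set m : ℕ := (j : ℕ) with hm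
    have hWij : ∀ i, W i j = ∑ b, (AZ ^ m) i b := by
      intro i
      rw [hW]
      simp [walkMatrix, Matrix.mulVec, dotProduct]; rfl
    set c : ℤ := ∑ i, (BZ ^ m) i j₀ with hcdef
    have hq : ((∑ i, W i j * v i : ℤ) : ℚ) = ((2 * c : ℤ) : ℚ) := by
      push_cast
      have hMs : ∀ a b, (A ^ m) a b = (A ^ m) b a := fun a b => (hAsym.pow m).apply b a
      calc ∑ i, ((W i j : ℤ) : ℚ) * (v i : ℚ)
          = ∑ i, (∑ b, (A ^ m) i b) * (2 * Q i j₀) := by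
            refine Finset.sum_congr rfl fun i _ => ?_
            rw [hN' i j₀, hWij i]
            push_cast
            congr 1
            exact Finset.sum_congr rfl fun b _ => hAZk m i b
        _ = 2 * ∑ i, (Qᵀ * (A ^ m) * Q) i j₀ := aux_walk_scalar Q (A ^ m) j₀ hrow hMs
        _ = 2 * ∑ i, ((BZ ^ m) i j₀ : ℚ) := by
            rw [hpow m]
            congr 1
            exact Finset.sum_congr rfl fun i _ => (hBZk m i j₀).symm
        _ = 2 * ((c : ℤ) : ℚ) := by rw [hcdef]; push_cast; ring
    have : (∑ i, W i j * v i : ℤ) = 2 * c := by exact_mod_cast hq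
    exact ⟨c, this⟩
  have hWu : ∀ j, (2:ℤ) ∣ (Wᵀ *ᵥ u) j := by
    intro j
    have happ : (Wᵀ *ᵥ u) j = ∑ i, W i j * u i := by
      simp [Matrix.mulVec, dotProduct, Matrix.transpose_apply]
    rw [happ]
    have hsplit : ∑ i, W i j * u i = (∑ i, W i j * v i) + 2 * ∑ i, W i j * w i := by
      rw [Finset.mul_sum, ← Finset.sum_add_distrib]
      refine Finset.sum_congr rfl fun i _ => ?_
      rw [hw i]; ring
    rw [hsplit]
    obtain ⟨c, hc⟩ := hWv j
    exact ⟨c + ∑ i, W i j * w i, by rw [hc]; ring⟩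
  -- u not ≡ 0 mod 2
  have hne : ¬ ∀ i, (2:ℤ) ∣ u i := by
    intro h
    have hpos : 0 < (Finset.univ.filter fun i => u i = 1).card := by rw [hcard]; norm_num
    obtain ⟨i, hi⟩ := Finset.card_pos.mp hpos
    have hui : u i = 1 := (Finset.mem_filter.mp hi).2
    have := h i
    omega
  exact ⟨u, hu01, hcard, fun k _ _ => hdvd4 k, hWu, hne⟩
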